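/- arXiv:2605.07595 — 2 statements merged into one kernel-verified Lean document; each statement's English description precedes it below -/
import Mathlib

section
/- Let q be a prime power, let a, b ∈ 𝔽_q^n with b ≠ 0, and let ℓ = {a + α b : α ∈ 𝔽_q} ⊆ 𝔽_q^n. Let 0 ≤ E ≤ E⁺ ≤ n be integers. If ℓ is not contained in the Hamming ball B_{E⁺}, then |ℓ ∩ B_E| ≤ (E⁺ + 1)/(E⁺ − E + 1). In particular, when E⁺ = E, if ℓ ⊄ B_E then |ℓ ∩ B_E| ≤ E + 1. -/
/-- The Hamming ball of radius `E` in `F^n`. -/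
def hamBall (F : Type) [Field F] [DecidableEq F] (n E : ℕ) : Set (Fin n → F) :=
  {x | hammingNorm x ≤ E}

/-- The affine line `{a + α b : α ∈ F}` in `F^n`. -/
def affLine {F : Type} [Field F] {n : ℕ} (a b : Fin n → F) : Set (Fin n → F) :=
  {t | ∃ α : F, t = a + α • b}

/-- If an affine line is not contained in `B_{E⁺}`, then it meets `B_E` in at most
`(E⁺+1)/(E⁺−E+1)` points; in particular when `E⁺ = E`, in at most `E+1` points. -/
theorem stmt_4 {F : Type} [Field F] [Fintype F] [DecidableEq F] {n : ℕ}
    (a b : Fin n → F) (hb : b ≠ 0) (E Ep : ℕ) (hEEp : E ≤ Ep) (hEpn : Ep ≤ n)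
    (hnot : ¬ affLine a b ⊆ hamBall F n Ep) :
    ((affLine a b ∩ hamBall F n E).ncard : ℝ) ≤ ((Ep : ℝ) + 1) / ((Ep : ℝ) - E + 1) ∧
    (Ep = E → (affLine a b ∩ hamBall F n E).ncard ≤ E + 1) := by
  classical
  -- witness with weight > Ep
  obtain ⟨x, hxl, hxB⟩ := Set.not_subset.1 hnot
  obtain ⟨α₀, rfl⟩ := hxl
  have hα₀ : Ep + 1 ≤ hammingNorm (a + α₀ • b) := by
    simp only [hamBall, Set.mem_setOf_eq, not_le] at hxB
    omega
  set S : Finset (Fin n) := Finset.univ.filter (fun i => a i + α₀ * b i ≠ 0) with hS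
  have hnorm : ∀ α : F, hammingNorm (a + α • b)
      = (Finset.univ.filter (fun i => a i + α * b i ≠ 0)).card := by
    intro α
    simp [hammingNorm, Pi.add_apply, Pi.smul_apply, smul_eq_mul]
  have hScard : Ep + 1 ≤ S.card := by
    rw [hnorm α₀] at hα₀; exact hα₀
  -- the set of good α's
  set A : Finset F := Finset.univ.filter (fun α => hammingNorm (a + α • b) ≤ E) with hA
  set φ : F → (Fin n → F) := fun α => a + α • b with hφ
  have hinj : Function.Injective φ := by
    intro x y h
    have h' : x • b = y • b := by
      have := h
      simpa [hφ, add_right_cancel_iff] using this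
    exact smul_left_injective F hb h'
  have hset : affLine a b ∩ hamBall F n E = ↑(A.image φ) := by
    ext x
    simp only [affLine, hamBall, Set.mem_inter_iff, Set.mem_setOf_eq, Finset.coe_image,
      Set.mem_image, Finset.mem_coe, hA, Finset.mem_filter, Finset.mem_univ, true_and, hφ]
    constructor
    · rintro ⟨⟨α, rfl⟩, hx⟩; exact ⟨α, hx, rfl⟩
    · rintro ⟨α, hx, rfl⟩; exact ⟨⟨α, rfl⟩, hx⟩
  have hncard : (affLine a b ∩ hamBall F n E).ncard = A.card := by
    rw [hset, Set.ncard_coe_finset, Finset.card_image_of_injective _ hinj]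
  -- double counting
  set r : F → Fin n → Prop := fun α i => a i + α * b i = 0 with hr
  have hcount : A.card * (S.card - E) ≤ S.card * 1 := by
    refine Finset.card_mul_le_card_mul r ?_ ?_
    · intro α hα
      have hαE : hammingNorm (a + α • b) ≤ E := by
        simpa [hA] using hα
      rw [hnorm α] at hαE
      have hsplit : (S.filter (fun i => r α i)).card + (S.filter (fun i => ¬ r α i)).card
          = S.card := Finset.card_filter_add_card_filter_not _
      have hsub : S.filter (fun i => ¬ r α i) ⊆
          Finset.univ.filter (fun i => a i + α * b i ≠ 0) := by
        intro i hi
        simp only [Finset.mem_filter, Finset.mem_univ, true_and] at hi ⊢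
        exact hi.2
      have := Finset.card_le_card hsub
      have hba : S.bipartiteAbove r α = S.filter (fun i => r α i) := rfl
      rw [hba]
      omega
    · intro i hi
      rw [Finset.card_le_one]
      intro α hα β hβ
      simp only [Finset.mem_bipartiteBelow, hr] at hα hβ
      have hbi : b i ≠ 0 := by
        intro hbi
        have : a i + α₀ * b i ≠ 0 := by
          simpa [hS] using hi
        apply this
        have := hα.2
        rw [hbi] at this ⊢
        simpa using this
      have : (α - β) * b i = 0 := by
        have h1 := hα.2; have h2 := hβ.2
        ring_nf
        linear_combination h1 - h2
      rcases mul_eq_zero.1 this with h | h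
      · exact sub_eq_zero.1 h
      · exact absurd h hbi
  -- key numerical inequality
  have key : (A.card : ℤ) * ((Ep : ℤ) - E + 1) ≤ (Ep : ℤ) + 1 := by
    rcases Nat.eq_zero_or_pos A.card with h0 | h1
    · have h0' : (A.card : ℤ) = 0 := by exact_mod_cast h0
      rw [h0', zero_mul]
      positivity
    · have hEs : E ≤ S.card := by omega
      have h2 : (A.card : ℤ) * ((S.card : ℤ) - E) ≤ (S.card : ℤ) := by
        have h2' : ((A.card * (S.card - E) : ℕ) : ℤ) ≤ ((S.card : ℕ) : ℤ) := by
          exact_mod_cast (by omega : A.card * (S.card - E) ≤ S.card)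
        rwa [Nat.cast_mul, Nat.cast_sub hEs] at h2'
      have hk : (1 : ℤ) ≤ A.card := by exact_mod_cast h1
      have hs : (Ep : ℤ) + 1 ≤ S.card := by exact_mod_cast hScard
      nlinarith [mul_nonneg (by linarith : (0:ℤ) ≤ (A.card : ℤ) - 1)
        (by linarith : (0:ℤ) ≤ (S.card : ℤ) - Ep - 1)]
  constructor
  · rw [hncard]
    have hd : (0:ℝ) < (Ep:ℝ) - E + 1 := by
      have : (E:ℝ) ≤ Ep := by exact_mod_cast hEEp
      linarith
    rw [le_div_iff₀ hd]
    have : ((A.card : ℤ) : ℝ) * (((Ep : ℤ) : ℝ) - ((E : ℤ) : ℝ) + 1)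
        ≤ ((Ep : ℤ) : ℝ) + 1 := by exact_mod_cast key
    push_cast at this ⊢
    linarith
  · intro hEpE
    rw [hncard]
    subst hEpE
    have h3 : (A.card : ℤ) ≤ (Ep : ℤ) + 1 := by simpa using key
    exact_mod_cast h3
end

section
/- Let q be a prime power, m ≥ 1, and u₀, u₁, …, u_m ∈ 𝔽_q^n. Let U = {u₀ + Σ_{j=1}^{m} α_j u_j : (α₁,…,α_m) ∈ 𝔽_q^m} ⊆ 𝔽_q^n and Supp(U) := ⋃_{u∈U} supp(u). Let 0 ≤ E ≤ E⁺ ≤ n. If |Supp(U)| > E⁺, then |U ∩ B_E| ≤ ((E⁺ + 1)/(E⁺ − E + 1))·q^{m−1}. -/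
/-- The affine space `u₀ + span(u₁,…,u_m)` as the set of all `u₀ + Σ α_j u_j`. -/
def affSpace {F : Type} [Field F] {n m : ℕ} (u₀ : Fin n → F) (u : Fin m → Fin n → F) :
    Set (Fin n → F) :=
  {v | ∃ α : Fin m → F, v = u₀ + ∑ j, α j • u j}

open Finset in
lemma hyperplane_card_le {F : Type} [Field F] [Fintype F] [DecidableEq F] {m : ℕ}
    (c : Fin m → F) (d : F) {j₀ : Fin m} (hj : c j₀ ≠ 0) :
    (univ.filter (fun α : Fin m → F => ∑ j, α j * c j = d)).card
      ≤ Fintype.card F ^ (m - 1) := by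
  classical
  have key : ∀ α : Fin m → F, (∑ j, α j * c j = d) →
      α j₀ = (d - ∑ j ∈ univ.erase j₀, α j * c j) * (c j₀)⁻¹ := by
    intro α hα
    rw [← Finset.add_sum_erase _ _ (mem_univ j₀)] at hα
    have h2 : d - ∑ j ∈ univ.erase j₀, α j * c j = α j₀ * c j₀ := by
      rw [← hα]; ring
    rw [h2, mul_assoc, mul_inv_cancel₀ hj, mul_one]
  have hinj : Set.InjOn (fun (α : Fin m → F) (j : {j : Fin m // j ≠ j₀}) => α j.1)
      ↑(univ.filter (fun α : Fin m → F => ∑ j, α j * c j = d)) := by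
    intro a ha b hb hab
    simp only [coe_filter, Set.mem_setOf_eq, mem_univ, true_and] at ha hb
    funext j
    by_cases hjj : j = j₀
    · rw [hjj, key a ha, key b hb]
      congr 2
      refine Finset.sum_congr rfl ?_
      intro k hk
      have hk' : k ≠ j₀ := (mem_erase.mp hk).1
      have := congrFun hab ⟨k, hk'⟩
      simp only at this
      rw [this]
    · have := congrFun hab ⟨j, hjj⟩
      simpa using this
  calc (univ.filter (fun α : Fin m → F => ∑ j, α j * c j = d)).card
      ≤ (univ : Finset ({j : Fin m // j ≠ j₀} → F)).card :=
        Finset.card_le_card_of_injOn _ (fun _ _ => mem_univ _) hinj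
    _ = Fintype.card F ^ (m - 1) := by
        rw [card_univ, Fintype.card_fun]
        congr 1
        rw [Fintype.card_subtype_compl, Fintype.card_subtype_eq, Fintype.card_fin]

open Finset in
lemma zi_card_le {F : Type} [Field F] [Fintype F] [DecidableEq F] {m : ℕ}
    (c : Fin m → F) (b : F) (h : ∃ α : Fin m → F, b + ∑ j, α j * c j ≠ 0) :
    (univ.filter (fun α : Fin m → F => b + ∑ j, α j * c j = 0)).card
      ≤ Fintype.card F ^ (m - 1) := by
  classical
  by_cases hc : ∃ j₀, c j₀ ≠ 0
  · obtain ⟨j₀, hj₀⟩ := hc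
    have heq : (univ.filter (fun α : Fin m → F => b + ∑ j, α j * c j = 0))
        = (univ.filter (fun α : Fin m → F => ∑ j, α j * c j = -b)) := by
      refine Finset.filter_congr ?_
      intro α _
      constructor
      · intro h'; linear_combination h'
      · intro h'; linear_combination h'
    rw [heq]
    exact hyperplane_card_le c (-b) hj₀
  · push_neg at hc
    obtain ⟨α, hα⟩ := h
    have hb : b ≠ 0 := by simpa [hc] using hα
    have hempty : (univ.filter (fun α : Fin m → F => b + ∑ j, α j * c j = 0)) = ∅ := by
      refine Finset.filter_false_of_mem ?_
      intro α' _
      simp [hc, hb]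
    rw [hempty]
    simp

open Finset in
/-- If the coordinate support of an affine `m`-space exceeds `E⁺`, then the space meets
`B_E` in at most `((E⁺+1)/(E⁺−E+1))·q^{m−1}` points. -/
theorem stmt_14 {F : Type} [Field F] [Fintype F] [DecidableEq F] {n : ℕ}
    (m : ℕ) (hm : 1 ≤ m) (u₀ : Fin n → F) (u : Fin m → Fin n → F)
    (E Ep : ℕ) (hEEp : E ≤ Ep) (hEpn : Ep ≤ n)
    (hsupp : Ep < (⋃ v ∈ affSpace u₀ u, {i : Fin n | v i ≠ 0}).ncard) :
    ((affSpace u₀ u ∩ hamBall F n E).ncard : ℝ) ≤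
      ((Ep : ℝ) + 1) / ((Ep : ℝ) - E + 1) * (Fintype.card F : ℝ) ^ (m - 1) := by
  classical
  set q := Fintype.card F with hqdef
  clear_value q
  set v : (Fin m → F) → (Fin n → F) := fun α => u₀ + ∑ j, α j • u j with hv
  clear_value v
  have hva : ∀ α : Fin m → F, v α = u₀ + ∑ j, α j • u j := fun α => congrFun hv α
  have hvi : ∀ (α : Fin m → F) (i : Fin n), v α i = u₀ i + ∑ j, α j * u j i := by
    intro α i
    simp [hv, Finset.sum_apply]
  have hfin : (⋃ w ∈ affSpace u₀ u, {i : Fin n | w i ≠ 0}).Finite := Set.toFinite _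
  have hScard' : Ep + 1 ≤ hfin.toFinset.card :=
    Nat.succ_le_of_lt (lt_of_lt_of_eq hsupp (Set.ncard_eq_toFinset_card _ hfin))
  clear hsupp
  obtain ⟨S, hSsub, hScard⟩ := Finset.exists_subset_card_eq hScard'
  have hSmem : ∀ i ∈ S, ∃ α : Fin m → F, u₀ i + ∑ j, α j * u j i ≠ 0 := by
    intro i hi
    have h1 := hSsub hi
    rw [Set.Finite.mem_toFinset] at h1
    simp only [Set.mem_iUnion, Set.mem_setOf_eq] at h1
    obtain ⟨w, hw, hwi⟩ := h1
    obtain ⟨α, rfl⟩ := hw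
    exact ⟨α, by simpa [Finset.sum_apply] using hwi⟩
  set T : Finset (Fin m → F) := univ.filter (fun α => hammingNorm (v α) ≤ E) with hT
  clear_value T
  have h1 : (affSpace u₀ u ∩ hamBall F n E).ncard ≤ T.card := by
    have himg : affSpace u₀ u ∩ hamBall F n E = v '' ↑T := by
      ext x
      constructor
      · rintro ⟨⟨α, rfl⟩, hx⟩
        refine ⟨α, ?_, hva α⟩
        simp only [hT, mem_coe, mem_filter, mem_univ, true_and]
        rw [hva α]
        exact hx
      · rintro ⟨α, hα, rfl⟩
        simp only [hT, mem_coe, mem_filter, mem_univ, true_and] at hα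
        refine ⟨⟨α, hva α⟩, ?_⟩
        show hammingNorm (v α) ≤ E
        exact hα
    rw [himg]
    calc (v '' ↑T).ncard ≤ (↑T : Set (Fin m → F)).ncard := Set.ncard_image_le T.finite_toSet
      _ = T.card := Set.ncard_coe_finset T
  have hupper : ∑ α ∈ T, (S.filter (fun i => v α i = 0)).card ≤ (Ep + 1) * q ^ (m - 1) := by
    have hswap : ∑ α ∈ T, (S.filter (fun i => v α i = 0)).card
        = ∑ i ∈ S, (T.filter (fun α => v α i = 0)).card := by
      simp only [Finset.card_filter]
      rw [Finset.sum_comm]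
    rw [hswap]
    calc ∑ i ∈ S, (T.filter (fun α => v α i = 0)).card
        ≤ ∑ _i ∈ S, q ^ (m - 1) := by
          refine Finset.sum_le_sum ?_
          intro i hi
          have hsub : T.filter (fun α => v α i = 0)
              ⊆ univ.filter (fun α : Fin m → F => u₀ i + ∑ j, α j * u j i = 0) := by
            intro α hα
            simp only [mem_filter] at hα ⊢
            exact ⟨mem_univ _, by rw [← hvi]; exact hα.2⟩
          rw [hqdef]
          exact le_trans (Finset.card_le_card hsub) (zi_card_le _ _ (hSmem i hi))
      _ = (Ep + 1) * q ^ (m - 1) := by rw [Finset.sum_const, hScard, smul_eq_mul]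
  have hlower : T.card * (Ep + 1 - E) ≤ ∑ α ∈ T, (S.filter (fun i => v α i = 0)).card := by
    calc T.card * (Ep + 1 - E) = ∑ _α ∈ T, (Ep + 1 - E) := by
          rw [Finset.sum_const, smul_eq_mul]
      _ ≤ _ := by
        refine Finset.sum_le_sum ?_
        intro α hα
        have hαT : hammingNorm (v α) ≤ E := by
          simp only [hT, mem_filter, mem_univ, true_and] at hα
          exact hα
        have hwt : (S.filter (fun i => ¬ (v α i = 0))).card ≤ E := by
          have hsub : S.filter (fun i => ¬ (v α i = 0))
              ⊆ univ.filter (fun i => v α i ≠ 0) :=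
            Finset.filter_subset_filter _ (Finset.subset_univ S)
          have h2 := Finset.card_le_card hsub
          have hnorm : (univ.filter (fun i => v α i ≠ 0)).card = hammingNorm (v α) := rfl
          omega
        have hsplit := Finset.card_filter_add_card_filter_not
          (s := S) (p := fun i => v α i = 0)
        omega
  have hkey : T.card * (Ep + 1 - E) ≤ (Ep + 1) * q ^ (m - 1) := le_trans hlower hupper
  have hcast : (T.card : ℝ) * ((Ep : ℝ) - E + 1) ≤ ((Ep : ℝ) + 1) * (q : ℝ) ^ (m - 1) := by
    have h' : ((T.card * (Ep + 1 - E) : ℕ) : ℝ) ≤ (((Ep + 1) * q ^ (m - 1) : ℕ) : ℝ) :=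
      Nat.cast_le.mpr hkey
    have hsubE : E ≤ Ep + 1 := by omega
    rw [Nat.cast_mul, Nat.cast_sub hsubE] at h'
    push_cast at h'
    linarith
  have hD : (0:ℝ) < (Ep : ℝ) - E + 1 := by
    have hle : (E : ℝ) ≤ (Ep : ℝ) := Nat.cast_le.mpr hEEp
    linarith
  have hN : ((affSpace u₀ u ∩ hamBall F n E).ncard : ℝ) ≤ (T.card : ℝ) := Nat.cast_le.mpr h1
  rw [div_mul_eq_mul_div, le_div_iff₀ hD]
  calc ((affSpace u₀ u ∩ hamBall F n E).ncard : ℝ) * ((Ep : ℝ) - E + 1)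
      ≤ (T.card : ℝ) * ((Ep : ℝ) - E + 1) := mul_le_mul_of_nonneg_right hN hD.le
    _ ≤ ((Ep : ℝ) + 1) * (q : ℝ) ^ (m - 1) := hcast
end
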